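/- In the setting of the base-L discretization of a measure μ_X that is δ-regular up to scale L^{−K} with constant C_R (0 < δ < 1), if I' is a child of a tree interval I with 0 ≤ H(I) < K, then μ_X(I')/μ_X(I) ≥ L^{−δ}/C_R', where C_R' = (3C_R²)^{1/(1−δ)}. -/

import Mathlib

open MeasureTheory Set Finset ENNReal

lemma exists_of_pos' (μ : Measure ℝ) (X S : Set ℝ) (hsupp : μ Xᶜ = 0) (h : 0 < μ S) :
    ∃ x, x ∈ S ∧ x ∈ X := by
  by_contra hcon
  push_neg at hcon
  have hsub : S ⊆ Xᶜ := fun x hx => hcon x hx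
  have := (measure_mono hsub).trans_eq hsupp
  exact absurd (le_antisymm this zero_le) h.ne'

lemma icc_split (μ : Measure ℝ) (a b c d : ℝ) (hab : a ≤ b) (hbc : b ≤ c) (hcd : c ≤ d) :
    μ (Icc a d) ≤ μ (Icc a b) + μ (Icc b c) + μ (Icc c d) := by
  calc μ (Icc a d) = μ (Icc a b ∪ (Icc b c ∪ Icc c d)) := by
        rw [Set.Icc_union_Icc_eq_Icc hbc hcd, Set.Icc_union_Icc_eq_Icc hab (hbc.trans hcd)]
    _ ≤ μ (Icc a b) + μ (Icc b c ∪ Icc c d) := measure_union_le _ _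
    _ ≤ μ (Icc a b) + (μ (Icc b c) + μ (Icc c d)) := by gcongr; exact measure_union_le _ _
    _ = _ := by ring

lemma count_lemma (μ : Measure ℝ) (t w : ℝ) (hw : 0 < w) (N p : ℕ) (hp : 1 ≤ p)
    (B : ℕ → Set ℝ)
    (hB : ∀ i < N, B i ⊆ Icc (t + i * w) (t + ((i : ℝ) + p) * w)) :
    ∑ i ∈ Finset.range N, μ (B i) ≤
      (p : ℝ≥0∞) * μ (Ico t (t + ((N : ℝ) + p - 1) * w)) +
        μ (Icc (t + p * w) (t + ((N : ℝ) + p - 1) * w)) := by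
  classical
  have key : ∀ a q : ℕ, μ (Ico (t + (a : ℝ) * w) (t + ((a : ℝ) + q) * w)) =
      ∑ j ∈ Finset.range q, μ (Ico (t + ((a : ℝ) + j) * w) (t + ((a : ℝ) + j + 1) * w)) := by
    intro a q
    induction q with
    | zero => simp
    | succ q ih =>
      have h1 : t + (a : ℝ) * w ≤ t + ((a : ℝ) + q) * w := by
        have : (0:ℝ) ≤ (q:ℝ) := Nat.cast_nonneg q
        nlinarith [hw.le]
      have h2 : t + ((a : ℝ) + q) * w ≤ t + ((a : ℝ) + q + 1) * w := by nlinarith [hw.le]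
      rw [Finset.sum_range_succ, ← ih,
        ← measure_union (Set.Ico_disjoint_Ico_same) measurableSet_Ico,
        Set.Ico_union_Ico_eq_Ico h1 h2]
      push_cast
      ring_nf
  have hcast : ∀ q : ℕ, (0:ℝ) ≤ q := fun q => Nat.cast_nonneg q
  have hp' : (1:ℝ) ≤ p := by exact_mod_cast hp
  calc ∑ i ∈ Finset.range N, μ (B i)
      ≤ ∑ i ∈ Finset.range N,
          (μ (Ico (t + (i:ℝ) * w) (t + ((i:ℝ) + p) * w)) + μ {t + ((i:ℝ) + p) * w}) := by
        apply Finset.sum_le_sum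
        intro i hi
        have hmem := Finset.mem_range.mp hi
        have hle : t + (i:ℝ) * w ≤ t + ((i:ℝ) + p) * w := by nlinarith [hw.le, hcast p]
        calc μ (B i) ≤ μ (Icc (t + (i:ℝ) * w) (t + ((i:ℝ) + p) * w)) :=
              measure_mono (hB i hmem)
          _ = μ (Ico (t + (i:ℝ) * w) (t + ((i:ℝ) + p) * w) ∪ {t + ((i:ℝ) + p) * w}) := by
              rw [Set.Ico_union_right hle]
          _ ≤ _ := measure_union_le _ _
    _ = (∑ i ∈ Finset.range N, μ (Ico (t + (i:ℝ) * w) (t + ((i:ℝ) + p) * w)))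
          + ∑ i ∈ Finset.range N, μ {t + ((i:ℝ) + p) * w} := Finset.sum_add_distrib
    _ ≤ (p : ℝ≥0∞) * μ (Ico t (t + ((N : ℝ) + p - 1) * w)) +
          μ (Icc (t + p * w) (t + ((N : ℝ) + p - 1) * w)) := by
        gcongr ?_ + ?_
        · -- part 1
          calc ∑ i ∈ Finset.range N, μ (Ico (t + (i:ℝ) * w) (t + ((i:ℝ) + p) * w))
              = ∑ i ∈ Finset.range N, ∑ j ∈ Finset.range p,
                  μ (Ico (t + ((i:ℝ) + j) * w) (t + ((i:ℝ) + j + 1) * w)) := by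
                exact Finset.sum_congr rfl fun i _ => key i p
            _ = ∑ j ∈ Finset.range p, ∑ i ∈ Finset.range N,
                  μ (Ico (t + ((i:ℝ) + j) * w) (t + ((i:ℝ) + j + 1) * w)) := Finset.sum_comm
            _ ≤ ∑ _j ∈ Finset.range p, μ (Ico t (t + ((N : ℝ) + p - 1) * w)) := by
                apply Finset.sum_le_sum
                intro j hj
                have hjp := Finset.mem_range.mp hj
                have hjp' : (j:ℝ) + 1 ≤ p := by exact_mod_cast hjp
                have e : ∑ i ∈ Finset.range N,
                    μ (Ico (t + ((i:ℝ) + j) * w) (t + ((i:ℝ) + j + 1) * w))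
                    = μ (Ico (t + (j:ℝ) * w) (t + ((j:ℝ) + N) * w)) := by
                  rw [key j N]
                  apply Finset.sum_congr rfl
                  intro i _
                  congr 2 <;> ring
                rw [e]
                apply measure_mono
                apply Set.Ico_subset_Ico
                · nlinarith [hw.le, hcast j]
                · nlinarith [hw.le, hcast j, hcast N]
            _ = (p : ℝ≥0∞) * μ (Ico t (t + ((N : ℝ) + p - 1) * w)) := by
                rw [Finset.sum_const, Finset.card_range, nsmul_eq_mul]
        · -- part 2
          have hd : (↑(Finset.range N) : Set ℕ).PairwiseDisjoint
              (fun i => ({t + ((i:ℝ) + p) * w} : Set ℝ)) := by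
            intro i _ j _ hij
            simp only [Set.disjoint_singleton]
            intro h
            apply hij
            have : ((i:ℝ) + p) * w = ((j:ℝ) + p) * w := by linarith
            have : (i:ℝ) = j := by
              have := mul_right_cancel₀ hw.ne' this
              linarith
            exact_mod_cast this
          rw [← measure_biUnion_finset hd (fun i _ => measurableSet_singleton _)]
          apply measure_mono
          apply Set.iUnion₂_subset
          intro i hi
          have hiN := Finset.mem_range.mp hi
          have hiN' : (i:ℝ) + 1 ≤ N := by exact_mod_cast hiN
          apply Set.singleton_subset_iff.mpr
          constructor
          · nlinarith [hw.le, hcast i]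
          · nlinarith [hw.le, hcast i]

def IsDeltaRegular (X : Set ℝ) (μ : Measure ℝ) (δ C h : ℝ) : Prop :=
  (∀ a b : ℝ, h ≤ b - a → μ (Set.Icc a b) ≤ ENNReal.ofReal (C * (b - a) ^ δ)) ∧
  (∀ x r : ℝ, x ∈ X → h ≤ 2 * r → 2 * r ≤ 1 →
    ENNReal.ofReal (C⁻¹ * (2 * r) ^ δ) ≤ μ (Set.Icc (x - r) (x + r)))

/-- `[c,d]` is an interval of the base-`L` discretization of `μ` at height `k`:
endpoints in `L^{-k}ℤ`, every constituent subinterval of length `L^{-k}` has positive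
measure, and the adjacent intervals of length `L^{-k}` have zero measure. -/
def MemVk (μ : Measure ℝ) (L : ℕ) (k : ℕ) (c d : ℝ) : Prop :=
  (∃ m : ℤ, c = (m : ℝ) * (L : ℝ) ^ (-(k : ℤ))) ∧
  (∃ m : ℤ, d = (m : ℝ) * (L : ℝ) ^ (-(k : ℤ))) ∧ c < d ∧
  (∀ m : ℤ, c ≤ (m : ℝ) * (L : ℝ) ^ (-(k : ℤ)) →
    (m : ℝ) * (L : ℝ) ^ (-(k : ℤ)) < d →
    0 < μ (Set.Icc ((m : ℝ) * (L : ℝ) ^ (-(k : ℤ)))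
      (((m : ℝ) + 1) * (L : ℝ) ^ (-(k : ℤ))))) ∧
  μ (Set.Icc (c - (L : ℝ) ^ (-(k : ℤ))) c) = 0 ∧
  μ (Set.Icc d (d + (L : ℝ) ^ (-(k : ℤ)))) = 0

set_option maxHeartbeats 2000000 in
theorem stmt17 (X : Set ℝ) (μX : Measure ℝ) (δ C_R : ℝ) (L K : ℕ)
    (hL : 2 ≤ L) (hK : 0 < K) (hδ0 : 0 < δ) (hδ1 : δ < 1) (hC : 1 ≤ C_R)
    (hX : IsCompact X) [IsFiniteMeasure μX] (hsupp : μX Xᶜ = 0)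
    (hreg : IsDeltaRegular X μX δ C_R ((L : ℝ) ^ (-(K : ℤ))))
    (k : ℕ) (hk : k < K) (c d c' d' : ℝ)
    (hI : MemVk μX L k c d) (hI' : MemVk μX L (k + 1) c' d')
    (hsub : Set.Icc c' d' ⊆ Set.Icc c d) :
    ENNReal.ofReal ((L : ℝ) ^ (-δ) / (3 * C_R ^ 2) ^ ((1 : ℝ) / (1 - δ))) *
        μX (Set.Icc c d) ≤ μX (Set.Icc c' d') := by
  obtain ⟨hreg1, hreg2⟩ := hreg
  have hL2 : (2:ℝ) ≤ (L:ℝ) := by exact_mod_cast hL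
  have hL1 : (1:ℝ) ≤ (L:ℝ) := by linarith
  have hLpos : (0:ℝ) < L := by linarith
  set ℓ : ℝ := (L:ℝ) ^ (-(k:ℤ)) with hℓdef
  set ℓ' : ℝ := (L:ℝ) ^ (-((k + 1 : ℕ) : ℤ)) with hℓ'def
  have hℓpos : 0 < ℓ := zpow_pos hLpos _
  have hℓ'pos : 0 < ℓ' := zpow_pos hLpos _
  have hℓ'L : ℓ' * L = ℓ := by
    rw [hℓ'def, hℓdef, ← zpow_add_one₀ (ne_of_gt hLpos)]
    congr 1
    push_cast
    ring
  have hℓK : (L:ℝ)^(-(K:ℤ)) ≤ ℓ := zpow_le_zpow_right₀ hL1 (by omega)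
  have hℓ'K : (L:ℝ)^(-(K:ℤ)) ≤ ℓ' := zpow_le_zpow_right₀ hL1 (by push_cast; omega)
  have hℓ1 : ℓ ≤ 1 := by
    have h := zpow_le_zpow_right₀ hL1 (show (-(k:ℤ)) ≤ 0 by omega)
    rw [zpow_zero] at h
    exact h
  have hLinv : ((L:ℝ))⁻¹ ≤ 1/2 := by
    rw [inv_le_comm₀ hLpos (by norm_num)]
    linarith
  have hℓ'half : 2 * ℓ' ≤ 1 := by
    have h1 : ℓ' ≤ (L:ℝ)^(-1:ℤ) := zpow_le_zpow_right₀ hL1 (by push_cast; omega)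
    rw [zpow_neg_one] at h1
    linarith
  have hKpos : (0:ℝ) < (L:ℝ)^(-(K:ℤ)) := zpow_pos hLpos _
  -- lower bound for I'
  obtain ⟨⟨m₀', hc'⟩, ⟨m₁', hd'⟩, hcd', hpos', hz'l, hz'r⟩ := hI'
  have hstep' : c' + ℓ' ≤ d' := by
    have hm : m₀' < m₁' := by
      have h := hcd'
      rw [hc', hd'] at h
      have := lt_of_mul_lt_mul_right h hℓ'pos.le
      exact_mod_cast this
    have h1 : ((m₀':ℝ) + 1) ≤ (m₁':ℝ) := by exact_mod_cast hm
    have h2 := mul_le_mul_of_nonneg_right h1 hℓ'pos.le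
    rw [hc', hd']
    linarith [h2]
  obtain ⟨x', hx'mem, hx'X⟩ : ∃ x, x ∈ Set.Icc c' (c' + ℓ') ∧ x ∈ X := by
    apply exists_of_pos' μX X _ hsupp
    have h1 : c' ≤ (m₀':ℝ) * ℓ' := le_of_eq hc'
    have h2 : (m₀':ℝ) * ℓ' < d' := by rw [← hc']; exact hcd'
    have hp := hpos' m₀' h1 h2
    have e1 : (m₀':ℝ) * ℓ' = c' := hc'.symm
    have e2 : ((m₀':ℝ) + 1) * ℓ' = c' + ℓ' := by rw [hc']; ring
    rwa [e1, e2] at hp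
  have hball' : ENNReal.ofReal (C_R⁻¹ * (2*ℓ')^δ) ≤ μX (Set.Icc (x' - ℓ') (x' + ℓ')) :=
    hreg2 x' ℓ' hx'X (by linarith) hℓ'half
  have hI'LB : ENNReal.ofReal (C_R⁻¹ * (2*ℓ')^δ) ≤ μX (Set.Icc c' d') := by
    refine hball'.trans ?_
    have hsub1 : Set.Icc (x' - ℓ') (x' + ℓ') ⊆ Set.Icc (c' - ℓ') (d' + ℓ') :=
      Set.Icc_subset_Icc (by linarith [hx'mem.1]) (by linarith [hx'mem.2])
    calc μX (Set.Icc (x' - ℓ') (x' + ℓ')) ≤ μX (Set.Icc (c' - ℓ') (d' + ℓ')) :=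
          measure_mono hsub1
      _ ≤ μX (Set.Icc (c' - ℓ') c') + μX (Set.Icc c' d') + μX (Set.Icc d' (d' + ℓ')) :=
          icc_split _ _ _ _ _ (by linarith) hcd'.le (by linarith)
      _ = μX (Set.Icc c' d') := by rw [hz'l, hz'r]; simp
  -- I side
  obtain ⟨⟨m₀, hcm⟩, ⟨m₁, hdm⟩, hcd, hposI, hzl, hzr⟩ := hI
  have hm01 : m₀ < m₁ := by
    have h := hcd
    rw [hcm, hdm] at h
    have := lt_of_mul_lt_mul_right h hℓpos.le
    exact_mod_cast this
  set n : ℕ := (m₁ - m₀).toNat with hndef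
  have hn1 : 1 ≤ n := by omega
  have hncast : ((n:ℝ)) = (m₁:ℝ) - (m₀:ℝ) := by
    have h : ((n:ℤ)) = m₁ - m₀ := by omega
    exact_mod_cast h
  have hdc : d - c = (n:ℝ) * ℓ := by rw [hcm, hdm, hncast]; ring
  have hn1' : (1:ℝ) ≤ (n:ℝ) := by exact_mod_cast hn1
  have hnpos : (0:ℝ) < (n:ℝ) := by linarith
  have hUB : μX (Set.Icc c d) ≤ ENNReal.ofReal (C_R * ((n:ℝ) * ℓ)^δ) := by
    have h5 := mul_le_mul_of_nonneg_right hn1' hℓpos.le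
    have h := hreg1 c d (le_trans hℓK (by rw [hdc]; linarith [h5]))
    rwa [hdc] at h
  -- choose points in subintervals
  have hxex : ∀ i : ℕ, ∃ x : ℝ, i < n →
      (x ∈ X ∧ c + (i:ℝ) * ℓ ≤ x ∧ x ≤ c + ((i:ℝ) + 1) * ℓ) := by
    intro i
    by_cases hi : i < n
    · have hicast : (i:ℝ) + 1 ≤ (n:ℝ) := by exact_mod_cast hi
      have hi0 : (0:ℝ) ≤ (i:ℝ) := Nat.cast_nonneg i
      have h1 : c ≤ ((m₀ + (i:ℤ) : ℤ):ℝ) * ℓ := by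
        push_cast
        rw [hcm]
        have hil : (0:ℝ) ≤ (i:ℝ) * ℓ := mul_nonneg hi0 hℓpos.le
        linarith [hil]
      have h2 : ((m₀ + (i:ℤ) : ℤ):ℝ) * ℓ < d := by
        push_cast
        rw [hdm]
        exact mul_lt_mul_of_pos_right (by linarith) hℓpos
      have hp := hposI (m₀ + (i:ℤ)) h1 h2
      obtain ⟨x, hxmem, hxX⟩ := exists_of_pos' μX X _ hsupp hp
      refine ⟨x, fun _ => ⟨hxX, ?_, ?_⟩⟩
      · have h3 := hxmem.1
        push_cast at h3
        rw [hcm]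
        linarith [h3]
      · have h3 := hxmem.2
        push_cast at h3
        rw [hcm]
        linarith [h3]
    · exact ⟨0, fun h => absurd h hi⟩
  choose xp hxp using hxex
  have hℓδpos : (0:ℝ) < ℓ^δ := Real.rpow_pos_of_pos hℓpos δ
  -- case packaging
  obtain ⟨r, w, t, p, hp1, hwpos, hr1, hr2, hBsub, htc, htd, hcp, harith⟩ :
      ∃ (r w t : ℝ) (p : ℕ), 1 ≤ p ∧ 0 < w ∧
      (L:ℝ)^(-(K:ℤ)) ≤ 2*r ∧ 2*r ≤ 1 ∧
      (∀ i : ℕ, i < n → Set.Icc (xp i - r) (xp i + r) ⊆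
        Set.Icc (t + (i:ℝ)*w) (t + ((i:ℝ) + p)*w)) ∧
      c - ℓ ≤ t ∧ t + ((n:ℝ) + p - 1)*w ≤ d + ℓ ∧ c ≤ t + (p:ℝ)*w ∧
      ((p:ℝ) + 1) * ℓ^δ ≤ 3 * 2^(1-δ) * (2*r)^δ := by
    rcases Nat.eq_zero_or_pos k with hk0 | hk1
    · have hℓeq1 : ℓ = 1 := by rw [hℓdef, hk0]; norm_num
      refine ⟨1/2, 1, c - 1/2, 2, by norm_num, by norm_num, ?_, by norm_num, ?_, ?_, ?_, ?_, ?_⟩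
      · have h := zpow_le_zpow_right₀ hL1 (show (-(K:ℤ)) ≤ 0 by omega)
        simp only [zpow_zero] at h
        linarith
      · intro i hi
        obtain ⟨_, h1, h2⟩ := hxp i hi
        rw [hℓeq1] at h1 h2
        push_cast
        exact Set.Icc_subset_Icc (by linarith) (by linarith)
      · linarith [hℓeq1]
      · rw [hℓeq1] at hdc
        push_cast
        linarith [hℓeq1]
      · push_cast; linarith
      · rw [hℓeq1]
        have h1 : (1:ℝ)^δ = 1 := Real.one_rpow δ
        have h2 : (2*(1/2) : ℝ) = 1 := by norm_num
        rw [h2, h1]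
        have h3 : (1:ℝ) ≤ 2^(1-δ) := Real.one_le_rpow (by norm_num) (by linarith)
        push_cast
        linarith
    · refine ⟨ℓ, ℓ, c - ℓ, 3, by norm_num, hℓpos, by linarith, ?_, ?_, by linarith,
        ?_, by push_cast; linarith, ?_⟩
      · have h1 : ℓ ≤ (L:ℝ)^(-1:ℤ) := zpow_le_zpow_right₀ hL1 (by omega)
        rw [zpow_neg_one] at h1
        linarith
      · intro i hi
        obtain ⟨_, h1, h2⟩ := hxp i hi
        push_cast
        exact Set.Icc_subset_Icc (by linarith) (by linarith)
      · push_cast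
        linarith [hdc]
      · have h1 : ((2:ℝ)*ℓ)^δ = 2^δ * ℓ^δ := Real.mul_rpow (by norm_num) hℓpos.le
        have h2 : (2:ℝ)^(1-δ) * 2^δ = 2 := by
          rw [← Real.rpow_add (by norm_num : (0:ℝ) < 2)]
          norm_num
        have e3 : 3*2^(1-δ)*(2^δ*ℓ^δ) = 6*ℓ^δ := by
          rw [show (3:ℝ)*2^(1-δ)*(2^δ*ℓ^δ) = 3*(2^(1-δ)*2^δ)*ℓ^δ from by ring, h2]
          ring
        rw [h1]
        push_cast
        rw [show (3:ℝ)*2^(1-δ)*(2^δ*ℓ^δ) = 6*ℓ^δ from e3]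
        linarith [hℓδpos]
  -- sum bounds
  have h2rpos : (0:ℝ) < 2*r := lt_of_lt_of_le hKpos hr1
  have hrpowpos : (0:ℝ) < (2*r)^δ := Real.rpow_pos_of_pos h2rpos δ
  have hsum_lb : (n : ℝ≥0∞) * ENNReal.ofReal (C_R⁻¹ * (2*r)^δ) ≤
      ∑ i ∈ Finset.range n, μX (Set.Icc (xp i - r) (xp i + r)) := by
    have hterm : ∀ i ∈ Finset.range n, ENNReal.ofReal (C_R⁻¹ * (2*r)^δ) ≤
        μX (Set.Icc (xp i - r) (xp i + r)) := by
      intro i hi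
      exact hreg2 (xp i) r ((hxp i (Finset.mem_range.mp hi)).1) hr1 hr2
    have := Finset.card_nsmul_le_sum (Finset.range n) _ _ hterm
    rwa [Finset.card_range, nsmul_eq_mul] at this
  have hsum_ub : ∑ i ∈ Finset.range n, μX (Set.Icc (xp i - r) (xp i + r)) ≤
      ((p : ℝ≥0∞) + 1) * μX (Set.Icc c d) := by
    refine (count_lemma μX t w hwpos n p hp1 _ hBsub).trans ?_
    have hIm : μX (Set.Ico t (t + ((n:ℝ) + p - 1)*w)) ≤ μX (Set.Icc c d) := by
      have hsub2 : Set.Ico t (t + ((n:ℝ) + p - 1)*w) ⊆ Set.Icc (c - ℓ) (d + ℓ) := by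
        intro y hy
        exact ⟨by linarith [hy.1], by linarith [hy.2.le]⟩
      calc μX (Set.Ico t (t + ((n:ℝ) + p - 1)*w)) ≤ μX (Set.Icc (c - ℓ) (d + ℓ)) :=
            measure_mono hsub2
        _ ≤ μX (Set.Icc (c - ℓ) c) + μX (Set.Icc c d) + μX (Set.Icc d (d + ℓ)) :=
            icc_split _ _ _ _ _ (by linarith) hcd.le (by linarith)
        _ = μX (Set.Icc c d) := by rw [hzl, hzr]; simp
    have hIa : μX (Set.Icc (t + (p:ℝ)*w) (t + ((n:ℝ) + p - 1)*w)) ≤ μX (Set.Icc c d) := by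
      calc μX (Set.Icc (t + (p:ℝ)*w) (t + ((n:ℝ) + p - 1)*w)) ≤ μX (Set.Icc c (d + ℓ)) :=
            measure_mono (Set.Icc_subset_Icc hcp htd)
        _ = μX (Set.Icc c d ∪ Set.Icc d (d + ℓ)) := by
            rw [Set.Icc_union_Icc_eq_Icc hcd.le (by linarith)]
        _ ≤ μX (Set.Icc c d) + μX (Set.Icc d (d + ℓ)) := measure_union_le _ _
        _ = μX (Set.Icc c d) := by rw [hzr]; simp
    calc (p : ℝ≥0∞) * μX (Set.Ico t (t + ((n:ℝ) + p - 1)*w)) +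
          μX (Set.Icc (t + (p:ℝ)*w) (t + ((n:ℝ) + p - 1)*w))
        ≤ (p : ℝ≥0∞) * μX (Set.Icc c d) + μX (Set.Icc c d) := by gcongr
      _ = ((p : ℝ≥0∞) + 1) * μX (Set.Icc c d) := by ring
  -- real inequality
  have hreal : (n:ℝ) * (C_R⁻¹ * (2*r)^δ) ≤ ((p:ℝ) + 1) * (C_R * ((n:ℝ)*ℓ)^δ) := by
    have h := hsum_lb.trans (hsum_ub.trans (mul_le_mul_right hUB _))
    have e1 : (n : ℝ≥0∞) * ENNReal.ofReal (C_R⁻¹ * (2*r)^δ) =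
        ENNReal.ofReal ((n:ℝ) * (C_R⁻¹ * (2*r)^δ)) := by
      rw [ENNReal.ofReal_mul (Nat.cast_nonneg n), ENNReal.ofReal_natCast]
    have e2 : ((p : ℝ≥0∞) + 1) * ENNReal.ofReal (C_R * ((n:ℝ)*ℓ)^δ) =
        ENNReal.ofReal (((p:ℝ) + 1) * (C_R * ((n:ℝ)*ℓ)^δ)) := by
      rw [ENNReal.ofReal_mul (show (0:ℝ) ≤ (p:ℝ)+1 by positivity),
        ENNReal.ofReal_add (Nat.cast_nonneg p) zero_le_one, ENNReal.ofReal_natCast,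
        ENNReal.ofReal_one]
    rw [e1, e2] at h
    exact (ENNReal.ofReal_le_ofReal_iff (by positivity)).mp h
  -- derive n ≤ 2P
  set P : ℝ := (3 * C_R ^ 2) ^ ((1:ℝ) / (1 - δ)) with hPdef
  have h3A : (0:ℝ) < 3 * C_R^2 := by positivity
  have hPpos : 0 < P := Real.rpow_pos_of_pos h3A _
  have hδ' : (0:ℝ) < 1 - δ := by linarith
  have hδ' : (0:ℝ) < 1 - δ := by linarith
  have hP1δ : P ^ (1-δ) = 3 * C_R^2 := by
    rw [hPdef, ← Real.rpow_mul h3A.le,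
      show (1:ℝ)/(1-δ)*(1-δ) = 1 from div_mul_cancel₀ 1 (ne_of_gt hδ'), Real.rpow_one]
  have hmulrpow : ((n:ℝ)*ℓ)^δ = (n:ℝ)^δ * ℓ^δ := Real.mul_rpow hnpos.le hℓpos.le
  have hstep2 : (n:ℝ) ≤ (3 * 2^(1-δ) * C_R^2) * (n:ℝ)^δ := by
    rw [hmulrpow] at hreal
    have hkey : ((n:ℝ) * C_R⁻¹) * (2*r)^δ ≤ (3*2^(1-δ) * C_R * (n:ℝ)^δ) * (2*r)^δ := by
      calc ((n:ℝ) * C_R⁻¹) * (2*r)^δ = (n:ℝ) * (C_R⁻¹ * (2*r)^δ) := by ring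
        _ ≤ ((p:ℝ) + 1) * (C_R * ((n:ℝ)^δ * ℓ^δ)) := hreal
        _ = (((p:ℝ) + 1) * ℓ^δ) * (C_R * (n:ℝ)^δ) := by ring
        _ ≤ (3*2^(1-δ)*(2*r)^δ) * (C_R * (n:ℝ)^δ) :=
            mul_le_mul_of_nonneg_right harith (by positivity)
        _ = (3*2^(1-δ) * C_R * (n:ℝ)^δ) * (2*r)^δ := by ring
    have h2 : (n:ℝ) * C_R⁻¹ ≤ 3*2^(1-δ) * C_R * (n:ℝ)^δ :=
      le_of_mul_le_mul_right hkey hrpowpos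
    have hCne : C_R ≠ 0 := by linarith
    have e : (n:ℝ) * C_R⁻¹ * C_R = n := by field_simp
    calc (n:ℝ) = (n:ℝ) * C_R⁻¹ * C_R := e.symm
      _ ≤ (3*2^(1-δ) * C_R * (n:ℝ)^δ) * C_R := mul_le_mul_of_nonneg_right h2 (by linarith)
      _ = (3 * 2^(1-δ) * C_R^2) * (n:ℝ)^δ := by ring
  have h2P : ((2:ℝ)*P)^(1-δ) = 3*2^(1-δ)*C_R^2 := by
    rw [Real.mul_rpow (by norm_num) hPpos.le, hP1δ]
    ring
  have hn2P : (n:ℝ) ≤ 2*P := by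
    by_contra hcon
    push_neg at hcon
    have h3 : ((2:ℝ)*P)^(1-δ) < (n:ℝ)^(1-δ) := Real.rpow_lt_rpow (by positivity) hcon hδ'
    have h4 : (n:ℝ)^(1-δ) * (n:ℝ)^δ = n := by
      rw [← Real.rpow_add hnpos]
      norm_num
    have h5 : (n:ℝ) < (n:ℝ)^(1-δ) * (n:ℝ)^δ := by
      calc (n:ℝ) ≤ (3*2^(1-δ)*C_R^2) * (n:ℝ)^δ := hstep2
        _ = ((2:ℝ)*P)^(1-δ) * (n:ℝ)^δ := by rw [h2P]
        _ < (n:ℝ)^(1-δ) * (n:ℝ)^δ := by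
            exact mul_lt_mul_of_pos_right h3 (Real.rpow_pos_of_pos hnpos δ)
    rw [h4] at h5
    exact lt_irrefl _ h5
  -- final real inequality
  have hnδ : (n:ℝ)^δ ≤ 2^δ * P^δ := by
    calc (n:ℝ)^δ ≤ ((2:ℝ)*P)^δ := Real.rpow_le_rpow hnpos.le hn2P hδ0.le
      _ = 2^δ * P^δ := Real.mul_rpow (by norm_num) hPpos.le
  have hPδ : P^δ * P^(1-δ) = P := by
    rw [← Real.rpow_add hPpos]
    norm_num
  have hfinal : ((L:ℝ)^(-δ) / P) * (C_R * ((n:ℝ)*ℓ)^δ) ≤ C_R⁻¹ * (2*ℓ')^δ := by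
    have hs : (0:ℝ) < (L:ℝ)^(-δ) := Real.rpow_pos_of_pos hLpos _
    have hC0 : (0:ℝ) < C_R := by linarith
    have h2ℓ' : ((2:ℝ)*ℓ')^δ = 2^δ * ℓ^δ * (L:ℝ)^(-δ) := by
      have e : (2:ℝ)*ℓ' = (2*ℓ) * ((L:ℝ))⁻¹ := by
        field_simp
        linarith [hℓ'L]
      rw [e, Real.mul_rpow (by positivity) (by positivity),
        Real.mul_rpow (by norm_num) hℓpos.le,
        Real.inv_rpow hLpos.le, ← Real.rpow_neg hLpos.le]
    rw [hmulrpow, h2ℓ']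
    have hkey2 : C_R * (n:ℝ)^δ ≤ C_R⁻¹ * 2^δ * P := by
      have hC0' : C_R ≠ 0 := ne_of_gt hC0
      have ePP : P = P^δ * (3 * C_R^2) := by rw [← hP1δ]; exact hPδ.symm
      have e : C_R⁻¹ * 2^δ * P = 3 * C_R * (2^δ * P^δ) := by
        calc C_R⁻¹ * 2^δ * P = C_R⁻¹ * 2^δ * (P^δ * (3 * C_R^2)) := by rw [← ePP]
          _ = 3 * C_R * (2^δ * P^δ) * (C_R⁻¹ * C_R) := by ring
          _ = 3 * C_R * (2^δ * P^δ) := by rw [inv_mul_cancel₀ hC0']; ring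
      rw [e]
      have h1 : C_R * (n:ℝ)^δ ≤ C_R * (2^δ * P^δ) :=
        mul_le_mul_of_nonneg_left hnδ (by linarith)
      have h6 : (0:ℝ) ≤ C_R * (2^δ * P^δ) := by positivity
      linarith [h1, h6]
    rw [div_mul_eq_mul_div, div_le_iff₀ hPpos]
    calc (L:ℝ)^(-δ) * (C_R * ((n:ℝ)^δ * ℓ^δ)) =
          ((L:ℝ)^(-δ) * ℓ^δ) * (C_R * (n:ℝ)^δ) := by ring
      _ ≤ ((L:ℝ)^(-δ) * ℓ^δ) * (C_R⁻¹ * 2^δ * P) :=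
          mul_le_mul_of_nonneg_left hkey2 (by positivity)
      _ = C_R⁻¹ * (2^δ * ℓ^δ * (L:ℝ)^(-δ)) * P := by ring
  -- conclude
  calc ENNReal.ofReal ((L:ℝ)^(-δ) / P) * μX (Set.Icc c d)
      ≤ ENNReal.ofReal ((L:ℝ)^(-δ) / P) * ENNReal.ofReal (C_R * ((n:ℝ)*ℓ)^δ) :=
        mul_le_mul_right hUB _
    _ = ENNReal.ofReal (((L:ℝ)^(-δ) / P) * (C_R * ((n:ℝ)*ℓ)^δ)) :=
        (ENNReal.ofReal_mul (by positivity)).symm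
    _ ≤ ENNReal.ofReal (C_R⁻¹ * (2*ℓ')^δ) := ENNReal.ofReal_le_ofReal hfinal
    _ ≤ μX (Set.Icc c' d') := hI'LB
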